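/- For n > 1 and nonnegative integers s₁,…,s_n, the n-fold Cauchy product ∏_{i=1}^n Li⁻_{s_i} equals ∑_{k₁=0}^{s₁} ∑_{k₂=0}^{s₂} ⋯ ∑_{k_{n−1}=0}^{s_{n−1}} (∏_{i=1}^{n−1} (−1)^{k_i} C(s_i,k_i)) · Li⁻_{(s₁−k₁, s₂−k₂+k₁, …, s_{n−1}−k_{n−1}+k_{n−2}, s_n+k_{n−1})}. -/

import Mathlib

open PowerSeries Finset

/-- Coefficient at `z^n` of the non-positive MPL attached to an index list:
for `s = (s₁,…,s_r)` this is `∑_{n = n₁ > n₂ > ⋯ > n_r > 0} n₁^{s₁}⋯n_r^{s_r}`. -/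
def liCoeff : List ℕ → ℕ → ℚ
  | [], n => if n = 0 then 1 else 0
  | s :: t, n => if n = 0 then 0 else (n : ℚ) ^ s * ∑ m ∈ Finset.range n, liCoeff t m

/-- The non-positive multiple polylogarithm
`Li⁻_{(s₁,…,s_r)}(z) = ∑_{n₁>⋯>n_r>0} n₁^{s₁}⋯n_r^{s_r} z^{n₁} ∈ ℚ⟦z⟧`. -/
noncomputable def Li (s : List ℕ) : PowerSeries ℚ := PowerSeries.mk (liCoeff s)

/-- Extension of a finite tuple to a function on `ℕ` (by `0`). -/
def ext {m : ℕ} (k : Fin m → ℕ) : ℕ → ℕ := fun i => if h : i < m then k ⟨i, h⟩ else 0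

noncomputable def consS (s : ℕ) (g : PowerSeries ℚ) : PowerSeries ℚ :=
  PowerSeries.mk fun n => if n = 0 then 0 else (n : ℚ) ^ s * ∑ m ∈ Finset.range n, (PowerSeries.coeff m) g

lemma Li_cons (s : ℕ) (t : List ℕ) : Li (s :: t) = consS s (Li t) := by
  ext n
  simp [Li, consS, liCoeff, coeff_mk]

lemma consS_sum {ι : Type*} (t : Finset ι) (s : ℕ) (f : ι → PowerSeries ℚ) :
    consS s (∑ i ∈ t, f i) = ∑ i ∈ t, consS s (f i) := by
  ext n
  simp only [consS, coeff_mk, map_sum]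
  split_ifs with h
  · simp
  · rw [Finset.sum_comm, Finset.mul_sum]

lemma consS_smul (c : ℚ) (s : ℕ) (g : PowerSeries ℚ) :
    consS s (c • g) = c • consS s g := by
  ext n
  simp only [consS, coeff_mk, PowerSeries.coeff_smul, smul_eq_mul]
  split_ifs with h
  · simp
  · rw [← Finset.mul_sum]
    ring

lemma my_sub_pow (x y : ℚ) (a : ℕ) :
    (x - y) ^ a = ∑ k ∈ range (a + 1), (-1 : ℚ) ^ k * (a.choose k : ℚ) * x ^ (a - k) * y ^ k := by
  rw [sub_eq_add_neg, add_pow, ← Finset.sum_range_reflect]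
  apply Finset.sum_congr rfl
  intro k hk
  rw [mem_range] at hk
  have h1 : a + 1 - 1 - k = a - k := by omega
  have h2 : a - (a - k) = k := by omega
  rw [h1, h2, Nat.choose_symm (by omega), neg_pow]
  ring

lemma antidiag_helper (n : ℕ) (f g : ℕ → ℚ) (hf : f 0 = 0) :
    ∑ p ∈ Finset.HasAntidiagonal.antidiagonal n, f p.1 * g p.2 = ∑ j ∈ range n, f (n - j) * g j := by
  rw [Finset.Nat.sum_antidiagonal_eq_sum_range_succ_mk, Finset.sum_range_succ',
    ← Finset.sum_range_reflect]
  simp only [hf, zero_mul, add_zero]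
  apply Finset.sum_congr rfl
  intro j hj
  rw [mem_range] at hj
  have h1 : n - 1 - j + 1 = n - j := by omega
  have h2 : n - (n - j) = j := by omega
  rw [h1, h2]

lemma coeff_Li_single (a i : ℕ) : coeff i (Li [a]) = if i = 0 then 0 else (i : ℚ) ^ a := by
  simp only [Li, coeff_mk, liCoeff]
  rcases eq_or_ne i 0 with rfl | hi
  · simp
  · rw [if_neg hi, if_neg hi]
    have h1 : (∑ m ∈ range i, if m = 0 then (1:ℚ) else 0) = 1 := by
      rw [Finset.sum_ite_eq' (range i) 0 fun _ => (1 : ℚ)]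
      rw [if_pos (mem_range.mpr (Nat.pos_of_ne_zero hi))]
    rw [h1, mul_one]

lemma coeff_consS (b i : ℕ) (g : PowerSeries ℚ) :
    coeff i (consS b g) =
      if i = 0 then 0 else (i : ℚ) ^ b * ∑ m ∈ range i, coeff m g := by
  simp [consS, coeff_mk]

lemma key (a b : ℕ) (g : PowerSeries ℚ) :
    Li [a] * consS b g = ∑ k ∈ range (a + 1),
      ((-1 : ℚ) ^ k * (a.choose k : ℚ)) • consS (a - k) (consS (b + k) g) := by
  ext n
  rw [map_sum, PowerSeries.coeff_mul]
  simp only [PowerSeries.coeff_smul, smul_eq_mul, coeff_consS, coeff_Li_single]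
  rcases Nat.eq_zero_or_pos n with rfl | hn
  · simp
  have step1 : (∑ p ∈ Finset.HasAntidiagonal.antidiagonal n,
        (if p.1 = 0 then (0:ℚ) else (p.1 : ℚ) ^ a) *
          (if p.2 = 0 then (0:ℚ) else (p.2 : ℚ) ^ b * ∑ m ∈ range p.2, coeff m g))
      = ∑ j ∈ range n,
        (if n - j = 0 then (0:ℚ) else ((n - j : ℕ) : ℚ) ^ a) *
          (if j = 0 then (0:ℚ) else (j : ℚ) ^ b * ∑ m ∈ range j, coeff m g) :=
    antidiag_helper n (fun i => if i = 0 then (0:ℚ) else (i : ℚ) ^ a)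
      (fun j => if j = 0 then (0:ℚ) else (j : ℚ) ^ b * ∑ m ∈ range j, coeff m g)
      (by simp)
  rw [step1]
  simp only [if_neg hn.ne']
  calc
    (∑ j ∈ range n,
        (if n - j = 0 then (0:ℚ) else ((n - j : ℕ) : ℚ) ^ a) *
          (if j = 0 then (0:ℚ) else (j : ℚ) ^ b * ∑ m ∈ range j, coeff m g))
      = ∑ j ∈ range n, ∑ k ∈ range (a + 1),
          (if j = 0 then (0:ℚ) else
            (-1 : ℚ) ^ k * (a.choose k : ℚ) * (n : ℚ) ^ (a - k) * (j : ℚ) ^ (b + k) *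
              ∑ m ∈ range j, coeff m g) := by
        apply Finset.sum_congr rfl
        intro j hj
        rw [mem_range] at hj
        rw [if_neg (show ¬ n - j = 0 by omega)]
        split_ifs with h
        · simp
        · have hjn : ((n - j : ℕ) : ℚ) = (n : ℚ) - (j : ℚ) := by
            rw [Nat.cast_sub hj.le]
          rw [hjn, my_sub_pow, Finset.sum_mul]
          apply Finset.sum_congr rfl
          intro k hk
          rw [pow_add]
          ring
    _ = ∑ k ∈ range (a + 1), ∑ j ∈ range n,
          (if j = 0 then (0:ℚ) else
            (-1 : ℚ) ^ k * (a.choose k : ℚ) * (n : ℚ) ^ (a - k) * (j : ℚ) ^ (b + k) *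
              ∑ m ∈ range j, coeff m g) := Finset.sum_comm
    _ = ∑ k ∈ range (a + 1),
          (-1 : ℚ) ^ k * (a.choose k : ℚ) *
            ((n : ℚ) ^ (a - k) * ∑ j ∈ range n,
              (if j = 0 then (0:ℚ) else (j : ℚ) ^ (b + k) * ∑ m ∈ range j, coeff m g)) := by
        apply Finset.sum_congr rfl
        intro k hk
        rw [Finset.mul_sum, Finset.mul_sum]
        apply Finset.sum_congr rfl
        intro j hj
        split_ifs with h
        · simp
        · ring

noncomputable def R : ℕ → ℕ → List ℕ → PowerSeries ℚ
  | c, a, [] => Li [a + c]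
  | c, a, b :: l => ∑ k ∈ range (a + 1),
      ((-1 : ℚ) ^ k * (a.choose k : ℚ)) • consS (a - k + c) (R k b l)

lemma mul_R (l : List ℕ) (a b : ℕ) : Li [a] * R 0 b l = R 0 a (b :: l) := by
  cases l with
  | nil =>
      show Li [a] * Li [b + 0] = ∑ k ∈ range (a + 1),
        ((-1 : ℚ) ^ k * (a.choose k : ℚ)) • consS (a - k + 0) (Li [b + k])
      have hb : Li [b + 0] = consS b (Li []) := by
        rw [Nat.add_zero]; exact Li_cons b []
      rw [hb, key]
      apply Finset.sum_congr rfl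
      intro k hk
      rw [Nat.add_zero, ← Li_cons]
  | cons b' l' =>
      show Li [a] * (∑ k' ∈ range (b + 1),
          ((-1 : ℚ) ^ k' * (b.choose k' : ℚ)) • consS (b - k' + 0) (R k' b' l'))
        = ∑ k ∈ range (a + 1),
          ((-1 : ℚ) ^ k * (a.choose k : ℚ)) • consS (a - k + 0) (R k b (b' :: l'))
      rw [Finset.mul_sum]
      simp only [Nat.add_zero, mul_smul_comm, key, Finset.smul_sum]
      rw [Finset.sum_comm]
      apply Finset.sum_congr rfl
      intro k hk
      have hR : R k b (b' :: l') = ∑ k' ∈ range (b + 1),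
          ((-1 : ℚ) ^ k' * (b.choose k' : ℚ)) • consS (b - k' + k) (R k' b' l') := rfl
      rw [hR, consS_sum]
      simp only [consS_smul]
      rw [Finset.smul_sum]
      apply Finset.sum_congr rfl
      intro k' hk'
      exact smul_comm _ _ _

lemma prod_eq_R : ∀ (M : ℕ) (v : Fin (M + 1) → ℕ),
    (∏ i, Li [v i]) = R 0 (v 0) (List.ofFn fun i : Fin M => v i.succ) := by
  intro M
  induction M with
  | zero =>
      intro v
      rw [List.ofFn_zero]
      show ∏ i : Fin 1, Li [v i] = Li [v 0 + 0]
      rw [Nat.add_zero]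
      simp [R]
  | succ M ih =>
      intro v
      rw [Fin.prod_univ_succ, ih (fun i => v i.succ), List.ofFn_succ, ← mul_R]

lemma ext_cons_zero {M : ℕ} (k₀ : ℕ) (k' : Fin M → ℕ) :
    ext (Fin.cons k₀ k' : Fin (M + 1) → ℕ) 0 = k₀ := by
  unfold _root_.ext
  rw [dif_pos (Nat.succ_pos M)]
  exact Fin.cons_zero (α := fun _ => ℕ) k₀ k'

lemma ext_cons_succ {M : ℕ} (k₀ : ℕ) (k' : Fin M → ℕ) (i : ℕ) :
    ext (Fin.cons k₀ k' : Fin (M + 1) → ℕ) (i + 1) = ext k' i := by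
  unfold _root_.ext
  by_cases h : i < M
  · rw [dif_pos (Nat.succ_lt_succ h), dif_pos h]
    exact Fin.cons_succ (α := fun _ => ℕ) k₀ k' ⟨i, h⟩
  · rw [dif_neg (by omega), dif_neg h]

lemma ext_shift {M : ℕ} (u : Fin (M + 1) → ℕ) (i : ℕ) :
    ext u (i + 1) = ext (fun j : Fin M => u j.succ) i := by
  unfold _root_.ext
  by_cases h : i < M
  · rw [dif_pos (Nat.succ_lt_succ h), dif_pos h]
    rfl
  · rw [dif_neg (by omega), dif_neg h]

lemma sum_piFinset_cons {M : ℕ} (F : Fin (M + 1) → Finset ℕ)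
    (G : (Fin (M + 1) → ℕ) → PowerSeries ℚ) :
    ∑ k ∈ Fintype.piFinset F, G k =
      ∑ k₀ ∈ F 0, ∑ k' ∈ Fintype.piFinset fun i : Fin M => F i.succ, G (Fin.cons k₀ k') := by
  rw [← Finset.sum_product']
  refine Finset.sum_nbij' (fun k => (k 0, Fin.tail k)) (fun p => Fin.cons p.1 p.2)
    ?_ ?_ ?_ ?_ ?_
  · intro k hk
    rw [Fintype.mem_piFinset] at hk
    rw [Finset.mem_product]
    exact ⟨hk 0, Fintype.mem_piFinset.2 fun i => hk i.succ⟩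
  · intro p hp
    rw [Finset.mem_product] at hp
    rw [Fintype.mem_piFinset]
    intro i
    refine Fin.cases ?_ ?_ i
    · simpa using hp.1
    · intro j
      simpa using Fintype.mem_piFinset.1 hp.2 j
  · intro k _
    exact Fin.cons_self_tail k
  · intro p _
    simp [Fin.tail_cons]
  · intro k _
    rw [Fin.cons_self_tail k]

lemma ext_zero {M : ℕ} (u : Fin (M + 1) → ℕ) : ext u 0 = u 0 := by
  unfold _root_.ext
  rw [dif_pos (Nat.succ_pos M)]
  congr 1

lemma ext_cons_eq {M : ℕ} (k₀ : ℕ) (k' : Fin M → ℕ) (i : ℕ) :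
    ext (Fin.cons k₀ k' : Fin (M + 1) → ℕ) i = if i = 0 then k₀ else ext k' (i - 1) := by
  cases i with
  | zero => simp [ext_cons_zero]
  | succ i => simp [ext_cons_succ]

lemma exp_lemma : ∀ (M c : ℕ) (u : Fin (M + 1) → ℕ),
    R c (u 0) (List.ofFn fun i : Fin M => u i.succ) =
      ∑ k ∈ Fintype.piFinset fun i : Fin M => Finset.range (ext u i + 1),
        (∏ i ∈ Finset.range M, (-1 : ℚ) ^ (ext k i) * ((ext u i).choose (ext k i) : ℚ)) •
          Li (List.ofFn fun j : Fin (M + 1) =>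
            if (j : ℕ) < M then
              u j - ext k j + (if (j : ℕ) = 0 then c else ext k ((j : ℕ) - 1))
            else u j + (if M = 0 then c else ext k (M - 1))) := by
  intro M
  induction M with
  | zero =>
      intro c u
      rw [List.ofFn_zero]
      show Li [u 0 + c] = _
      have hsing : (Fintype.piFinset fun i : Fin 0 => Finset.range (ext u i + 1))
          = {fun i => i.elim0} := by
        apply Finset.eq_singleton_iff_unique_mem.2
        constructor
        · rw [Fintype.mem_piFinset]; intro a; exact a.elim0
        · intro x _; funext a; exact a.elim0
      rw [hsing, Finset.sum_singleton, Finset.prod_range_zero, one_smul]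
      congr 1
  | succ M ih =>
      intro c u
      rw [List.ofFn_succ]
      show (∑ k₀ ∈ range (u 0 + 1), ((-1 : ℚ) ^ k₀ * ((u 0).choose k₀ : ℚ)) •
          consS (u 0 - k₀ + c)
            (R k₀ (u (0 : Fin (M + 1)).succ)
              (List.ofFn fun i : Fin M => u i.succ.succ))) = _
      rw [sum_piFinset_cons (fun i : Fin (M + 1) => Finset.range (ext u (i : ℕ) + 1))]
      have hb : ((0 : Fin (M + 1)) : ℕ) = 0 := rfl
      simp only [hb, ext_zero, Fin.val_succ]
      have hbnd : (fun i : Fin M => Finset.range (ext u ((i : ℕ) + 1) + 1))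
          = fun i : Fin M => Finset.range (ext (fun j : Fin (M + 1) => u j.succ) (i : ℕ) + 1) := by
        funext i
        rw [ext_shift]
      rw [hbnd]
      apply Finset.sum_congr rfl
      intro k₀ hk₀
      have hsplit : R k₀ (u (0 : Fin (M + 1)).succ) (List.ofFn fun i : Fin M => u i.succ.succ)
          = ∑ k' ∈ Fintype.piFinset fun i : Fin M =>
                Finset.range (ext (fun j : Fin (M + 1) => u j.succ) (i : ℕ) + 1),
              (∏ i ∈ Finset.range M, (-1 : ℚ) ^ (ext k' i) *
                  ((ext (fun j : Fin (M + 1) => u j.succ) i).choose (ext k' i) : ℚ)) •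
                Li (List.ofFn fun j : Fin (M + 1) =>
                  if (j : ℕ) < M then
                    u j.succ - ext k' j + (if (j : ℕ) = 0 then k₀ else ext k' ((j : ℕ) - 1))
                  else u j.succ + (if M = 0 then k₀ else ext k' (M - 1))) :=
        ih k₀ fun j : Fin (M + 1) => u j.succ
      rw [hsplit, consS_sum]
      simp only [consS_smul, ← Li_cons]
      rw [Finset.smul_sum]
      apply Finset.sum_congr rfl
      intro k' hk'
      rw [smul_smul]
      have hcoef : (∏ i ∈ Finset.range (M + 1),
            (-1 : ℚ) ^ (ext (Fin.cons k₀ k' : Fin (M + 1) → ℕ) i) *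
              ((ext u i).choose (ext (Fin.cons k₀ k' : Fin (M + 1) → ℕ) i) : ℚ))
          = ((-1 : ℚ) ^ k₀ * ((u 0).choose k₀ : ℚ)) *
            ∏ i ∈ Finset.range M, (-1 : ℚ) ^ (ext k' i) *
              ((ext (fun j : Fin (M + 1) => u j.succ) i).choose (ext k' i) : ℚ) := by
        rw [Finset.prod_range_succ']
        rw [mul_comm]
        congr 1
        apply Finset.prod_congr rfl
        intro i hi
        rw [ext_cons_succ, ext_shift]
      have hlist : (List.ofFn fun j : Fin (M + 1 + 1) =>
            if (j : ℕ) < M + 1 then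
              u j - ext (Fin.cons k₀ k' : Fin (M + 1) → ℕ) j +
                (if (j : ℕ) = 0 then c else ext (Fin.cons k₀ k' : Fin (M + 1) → ℕ) ((j : ℕ) - 1))
            else u j + (if M + 1 = 0 then c else ext (Fin.cons k₀ k' : Fin (M + 1) → ℕ) (M + 1 - 1)))
          = (u 0 - k₀ + c) ::
            List.ofFn fun j : Fin (M + 1) =>
              if (j : ℕ) < M then
                u j.succ - ext k' j + (if (j : ℕ) = 0 then k₀ else ext k' ((j : ℕ) - 1))
              else u j.succ + (if M = 0 then k₀ else ext k' (M - 1)) := by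
        rw [List.ofFn_succ]
        congr 1
        congr 1
        funext j
        simp only [Fin.val_succ, ext_cons_eq, Nat.add_sub_cancel, Nat.add_lt_add_iff_right,
          Nat.succ_ne_zero, if_false, Nat.add_eq_zero, one_ne_zero, and_false]
      rw [hcoef, hlist, mul_comm]

theorem Li_n_fold_product (n : ℕ) (hn : 1 < n) (s : Fin n → ℕ) :
    (∏ i : Fin n, Li [s i]) =
      ∑ k ∈ Fintype.piFinset (fun i : Fin (n - 1) => Finset.range (ext s i + 1)),
        (∏ i ∈ Finset.range (n - 1),
            (-1 : ℚ) ^ (ext k i) * ((ext s i).choose (ext k i) : ℚ)) •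
          Li (List.ofFn fun j : Fin n =>
            if (j : ℕ) < n - 1 then
              s j - ext k j + (if (j : ℕ) = 0 then 0 else ext k ((j : ℕ) - 1))
            else s j + ext k (n - 2)) := by
  obtain ⟨m, rfl⟩ : ∃ m, n = m + 2 := ⟨n - 2, by omega⟩
  show (∏ i : Fin (m + 2), Li [s i]) =
      ∑ k ∈ Fintype.piFinset (fun i : Fin (m + 1) => Finset.range (ext s i + 1)),
        (∏ i ∈ Finset.range (m + 1),
            (-1 : ℚ) ^ (ext k i) * ((ext s i).choose (ext k i) : ℚ)) •
          Li (List.ofFn fun j : Fin (m + 2) =>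
            if (j : ℕ) < m + 1 then
              s j - ext k j + (if (j : ℕ) = 0 then 0 else ext k ((j : ℕ) - 1))
            else s j + ext k m)
  rw [prod_eq_R (m + 1) s, exp_lemma (m + 1) 0 s]
  simp only [if_neg (Nat.succ_ne_zero m), Nat.add_sub_cancel]
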